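/- Bounds on the Partial Allocation fractions (Theorem 4.1, part on y_i): Let (f_1,…,f_n) be a profile of piecewise constant value density functions on [0,1], let A be an MNW allocation for the n agents, and for an agent i let A^i be an MNW allocation of the whole cake [0,1] among the n − 1 agents other than i (with respect to (f_j)_{j≠i}). Then ∏_{j≠i} v_j(A_j) ≤ ∏_{j≠i} v_j(A^i_j) ≤ e · ∏_{j≠i} v_j(A_j); equivalently, the fraction y_i = (∏_{j≠i} v_j(A_j)) / (∏_{j≠i} v_j(A^i_j)) satisfies 1/e ≤ y_i ≤ 1. -/

import Mathlib

open MeasureTheory Set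

noncomputable def cakeval (f : ℝ → ℝ) (S : Set ℝ) : ℝ := ∫ x in S, f x

def PiecewiseConstant (f : ℝ → ℝ) : Prop :=
  ∃ (m : ℕ) (a : Fin (m + 1) → ℝ) (c : Fin m → ℝ),
    a 0 = 0 ∧ a (Fin.last m) = 1 ∧ Monotone a ∧
    ∀ t : Fin m, ∀ x ∈ Set.Ico (a t.castSucc) (a t.succ), f x = c t

def ValidDensity (f : ℝ → ℝ) : Prop :=
  PiecewiseConstant f ∧ (∀ x, 0 ≤ f x) ∧ 0 < cakeval f (Set.Icc 0 1)

def FinUnionIcc (S : Set ℝ) : Prop :=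
  ∃ (k : ℕ) (a b : Fin k → ℝ), S = ⋃ j, Set.Icc (a j) (b j)

def IsAllocOn {n : ℕ} (C : Set ℝ) (A : Fin n → Set ℝ) : Prop :=
  (∀ i, A i ⊆ C) ∧ (∀ i, FinUnionIcc (A i)) ∧
    Pairwise fun i j => volume (A i ∩ A j) = 0

def IsAlloc {n : ℕ} (A : Fin n → Set ℝ) : Prop := IsAllocOn (Set.Icc 0 1) A

def CompleteAlloc {n : ℕ} (A : Fin n → Set ℝ) : Prop := (⋃ i, A i) = Set.Icc (0 : ℝ) 1

noncomputable def nashProd {n : ℕ} (f : Fin n → ℝ → ℝ) (A : Fin n → Set ℝ) : ℝ :=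
  ∏ i, cakeval (f i) (A i)

def IsMNWOn {n : ℕ} (C : Set ℝ) (f : Fin n → ℝ → ℝ) (A : Fin n → Set ℝ) : Prop :=
  IsAllocOn C A ∧ ∀ B : Fin n → Set ℝ, IsAllocOn C B → nashProd f B ≤ nashProd f A

def IsMNW {n : ℕ} (f : Fin n → ℝ → ℝ) (A : Fin n → Set ℝ) : Prop :=
  IsMNWOn (Set.Icc 0 1) f A

def IsCompleteMNW {n : ℕ} (f : Fin n → ℝ → ℝ) (A : Fin n → Set ℝ) : Prop :=
  IsAlloc A ∧ CompleteAlloc A ∧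
    ∀ B : Fin n → Set ℝ, IsAlloc B → CompleteAlloc B → nashProd f B ≤ nashProd f A


-- ===== auxiliary lemmas =====

lemma finUnionIcc_empty : FinUnionIcc (∅ : Set ℝ) :=
  ⟨0, Fin.elim0, Fin.elim0, by simp⟩

lemma finUnionIcc_Icc (a b : ℝ) : FinUnionIcc (Icc a b) :=
  ⟨1, fun _ => a, fun _ => b, by simp [Set.iUnion_const]⟩

lemma FinUnionIcc.union {S T : Set ℝ} (hS : FinUnionIcc S) (hT : FinUnionIcc T) :
    FinUnionIcc (S ∪ T) := by
  obtain ⟨k, a, b, rfl⟩ := hS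
  obtain ⟨k', a', b', rfl⟩ := hT
  refine ⟨k + k', fun j => Sum.elim a a' (finSumFinEquiv.symm j),
    fun j => Sum.elim b b' (finSumFinEquiv.symm j), ?_⟩
  ext x
  simp only [Set.mem_union, Set.mem_iUnion]
  constructor
  · rintro (⟨j, hj⟩ | ⟨j, hj⟩)
    · exact ⟨finSumFinEquiv (.inl j), by simpa using hj⟩
    · exact ⟨finSumFinEquiv (.inr j), by simpa using hj⟩
  · rintro ⟨j, hj⟩
    rcases h : finSumFinEquiv.symm j with p | p <;> rw [h] at hj
    · exact Or.inl ⟨p, by simpa using hj⟩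
    · exact Or.inr ⟨p, by simpa using hj⟩

lemma FinUnionIcc.inter {S T : Set ℝ} (hS : FinUnionIcc S) (hT : FinUnionIcc T) :
    FinUnionIcc (S ∩ T) := by
  obtain ⟨k, a, b, rfl⟩ := hS
  obtain ⟨k', a', b', rfl⟩ := hT
  refine ⟨k * k', fun j => max (a (finProdFinEquiv.symm j).1) (a' (finProdFinEquiv.symm j).2),
    fun j => min (b (finProdFinEquiv.symm j).1) (b' (finProdFinEquiv.symm j).2), ?_⟩
  ext x
  simp only [Set.mem_inter_iff, Set.mem_iUnion, Set.mem_Icc, max_le_iff, le_min_iff, sup_le_iff,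
    le_inf_iff]
  constructor
  · rintro ⟨⟨j, hj⟩, ⟨j', hj'⟩⟩
    refine ⟨finProdFinEquiv (j, j'), ?_⟩
    simp only [Equiv.symm_apply_apply]
    exact ⟨⟨hj.1, hj'.1⟩, hj.2, hj'.2⟩
  · rintro ⟨j, ⟨h1, h2⟩, h3, h4⟩
    exact ⟨⟨_, h1, h3⟩, ⟨_, h2, h4⟩⟩

lemma FinUnionIcc.measurableSet {S : Set ℝ} (hS : FinUnionIcc S) : MeasurableSet S := by
  obtain ⟨k, a, b, rfl⟩ := hS
  exact MeasurableSet.iUnion fun j => measurableSet_Icc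

/-- complement within [0,1], up to measure zero -/
lemma finUnionIcc_compl {S : Set ℝ} (hS : FinUnionIcc S) :
    ∃ T, FinUnionIcc T ∧ T ⊆ Icc 0 1 ∧ Icc (0:ℝ) 1 ⊆ S ∪ T ∧ volume (S ∩ T) = 0 := by
  obtain ⟨k, a, b, rfl⟩ := hS
  induction k with
  | zero =>
    exact ⟨Icc 0 1, finUnionIcc_Icc 0 1, le_refl _, by simp, by simp⟩
  | succ k ih =>
    obtain ⟨T, hT, hTsub, hTcov, hTnull⟩ := ih (fun j => a j.castSucc) (fun j => b j.castSucc)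
    set L : Set ℝ := Icc (a (Fin.last k)) (b (Fin.last k)) with hL
    refine ⟨(T ∩ Icc 0 (a (Fin.last k))) ∪ (T ∩ Icc (b (Fin.last k)) 1),
      ((hT.inter (finUnionIcc_Icc _ _)).union (hT.inter (finUnionIcc_Icc _ _))), ?_, ?_, ?_⟩
    · intro x hx
      rcases hx with hx | hx
      · exact hTsub hx.1
      · exact hTsub hx.1
    · intro x hx
      by_cases hxL : x ∈ L
      · exact Or.inl (Set.mem_iUnion.2 ⟨Fin.last k, hxL⟩)
      by_cases hxU : x ∈ ⋃ j : Fin k, Icc (a j.castSucc) (b j.castSucc)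
      · obtain ⟨j, hj⟩ := Set.mem_iUnion.1 hxU
        exact Or.inl (Set.mem_iUnion.2 ⟨j.castSucc, hj⟩)
      · have hxT : x ∈ T := by
          rcases hTcov hx with h | h
          · exact absurd h hxU
          · exact h
        rw [Set.mem_Icc] at hxL
        push_neg at hxL
        rcases lt_or_ge x (a (Fin.last k)) with h | h
        · exact Or.inr (Or.inl ⟨hxT, hx.1, h.le⟩)
        · exact Or.inr (Or.inr ⟨hxT, (hxL h).le, hx.2⟩)
    · set T' := (T ∩ Icc 0 (a (Fin.last k))) ∪ (T ∩ Icc (b (Fin.last k)) 1) with hT'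
      have hsplit : (⋃ j : Fin (k+1), Icc (a j) (b j)) =
          (⋃ j : Fin k, Icc (a j.castSucc) (b j.castSucc)) ∪ L := by
        ext x
        simp only [Set.mem_iUnion, Set.mem_union]
        constructor
        · rintro ⟨j, hj⟩
          rcases Fin.eq_castSucc_or_eq_last j with ⟨p, rfl⟩ | rfl
          · exact Or.inl ⟨p, hj⟩
          · exact Or.inr hj
        · rintro (⟨j, hj⟩ | hj)
          · exact ⟨j.castSucc, hj⟩
          · exact ⟨Fin.last k, hj⟩
      rw [hsplit, Set.union_inter_distrib_right]
      refine measure_union_null ?_ ?_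
      · refine measure_mono_null ?_ hTnull
        intro x hx
        rcases hx.2 with h | h
        · exact ⟨hx.1, h.1⟩
        · exact ⟨hx.1, h.1⟩
      · refine measure_mono_null (t := {a (Fin.last k), b (Fin.last k)}) ?_ ?_
        · rintro x ⟨hxL, hx⟩
          rcases hx with h | h
          · exact Or.inl (le_antisymm hxL.1 h.2.2).symm
          · exact Or.inr (le_antisymm h.2.1 hxL.2).symm
        · exact (Set.Finite.measure_zero (by simp) volume)

section ck
variable {f : ℝ → ℝ} {S T : Set ℝ}

lemma cakeval_nonneg (hS : MeasurableSet S) (hf0 : ∀ x, 0 ≤ f x) : 0 ≤ cakeval f S :=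
  setIntegral_nonneg hS fun x _ => hf0 x

lemma cakeval_mono (hf0 : ∀ x, 0 ≤ f x) (hT : IntegrableOn f T) (hST : S ⊆ T) :
    cakeval f S ≤ cakeval f T :=
  setIntegral_mono_set hT (Filter.Eventually.of_forall fun x => hf0 x) hST.eventuallyLE

lemma cakeval_union (hd : volume (S ∩ T) = 0) (hT : MeasurableSet T)
    (hiS : IntegrableOn f S) (hiT : IntegrableOn f T) :
    cakeval f (S ∪ T) = cakeval f S + cakeval f T :=
  integral_union_ae hd hT.nullMeasurableSet hiS hiT

lemma cakeval_biUnion {ι : Type*} [DecidableEq ι] (s : Finset ι) (U : ι → Set ℝ)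
    (hm : ∀ r ∈ s, MeasurableSet (U r)) (hi : ∀ r ∈ s, IntegrableOn f (U r))
    (hd : ∀ r ∈ s, ∀ r' ∈ s, r ≠ r' → volume (U r ∩ U r') = 0) :
    cakeval f (⋃ r ∈ s, U r) = ∑ r ∈ s, cakeval f (U r) := by
  induction s using Finset.induction with
  | empty => simp [cakeval]
  | @insert a s' ha ih =>
    have hnull : volume (U a ∩ ⋃ x ∈ s', U x) = 0 := by
      rw [Set.inter_iUnion₂]
      refine (measure_biUnion_null_iff s'.countable_toSet).mpr ?_
      intro r hr
      exact hd a (Finset.mem_insert_self a s') r (Finset.mem_insert_of_mem hr)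
        (fun h => ha (h ▸ hr))
    have hu := cakeval_union (S := U a) (T := ⋃ x ∈ s', U x) hnull
      (MeasurableSet.biUnion s'.countable_toSet
        (fun r hr => hm r (Finset.mem_insert_of_mem hr)))
      (hi a (Finset.mem_insert_self a s'))
      (integrableOn_finset_iUnion.mpr fun r hr => hi r (Finset.mem_insert_of_mem hr))
    rw [Finset.set_biUnion_insert, Finset.sum_insert ha, hu,
      ih (fun r hr => hm r (Finset.mem_insert_of_mem hr))
        (fun r hr => hi r (Finset.mem_insert_of_mem hr))
        (fun r hr r' hr' hne => hd r (Finset.mem_insert_of_mem hr) r'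
          (Finset.mem_insert_of_mem hr') hne)]

lemma cakeval_le_of_bound {M : ℝ} (hS : MeasurableSet S) (hfin : volume S ≠ ⊤)
    (hi : IntegrableOn f S) (hb : ∀ x ∈ S, f x ≤ M) :
    cakeval f S ≤ (volume S).toReal * M := by
  have := setIntegral_mono_on hi
    ((integrableOn_const_iff (C := M)).mpr (Or.inr hfin.lt_top)) hS hb
  simpa [cakeval, setIntegral_const, Measure.real] using this

end ck

section density
variable {f : ℝ → ℝ}

lemma pc_cover {m : ℕ} {a : Fin (m+1) → ℝ} (h0 : a 0 = 0) (h1 : a (Fin.last m) = 1)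
    (hm : Monotone a) : ∀ x ∈ Ico (0:ℝ) 1, ∃ t : Fin m, x ∈ Ico (a t.castSucc) (a t.succ) := by
  intro x hx
  have hne : (Finset.univ.filter (fun s : Fin (m+1) => a s ≤ x)).Nonempty :=
    ⟨0, by simp [h0, hx.1]⟩
  set F := (Finset.univ.filter (fun s : Fin (m+1) => a s ≤ x)) with hF
  have hmem := F.max'_mem hne
  set s0 := F.max' hne with hs0
  rw [hF, Finset.mem_filter] at hmem
  have hax : a s0 ≤ x := hmem.2
  have hlast : s0 ≠ Fin.last m := by
    intro h
    rw [h, h1] at hax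
    exact absurd hx.2 (not_lt.mpr hax)
  have hlt : (s0 : ℕ) < m := Fin.val_lt_last hlast
  refine ⟨⟨(s0 : ℕ), hlt⟩, ?_, ?_⟩
  · have : (⟨(s0 : ℕ), hlt⟩ : Fin m).castSucc = s0 := by
      apply Fin.ext; rfl
    rw [this]; exact hax
  · by_contra hcon
    push_neg at hcon
    have hsuc : (⟨(s0 : ℕ), hlt⟩ : Fin m).succ ∈ F := by
      rw [hF, Finset.mem_filter]; exact ⟨Finset.mem_univ _, hcon⟩
    have := F.le_max' _ hsuc
    rw [← hs0] at this
    have h2 : (s0 : ℕ) + 1 ≤ (s0 : ℕ) := this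
    omega

lemma ValidDensity.integrableOn (hf : ValidDensity f) {S : Set ℝ}
    (hS1 : S ⊆ Icc 0 1) : IntegrableOn f S := by
  obtain ⟨⟨m, a, c, h0, h1, hmono, hpc⟩, hf0, _⟩ := hf
  have base : IntegrableOn f ((⋃ t ∈ (Finset.univ : Finset (Fin m)),
      Ico (a t.castSucc) (a t.succ)) ∪ {1}) := by
    rw [integrableOn_union]
    constructor
    · rw [integrableOn_finset_iUnion]
      intro t _
      exact ((integrableOn_const_iff (C := c t)).mpr
        (Or.inr measure_Ico_lt_top)).congr_fun
        (fun x hx => (hpc t x hx).symm) measurableSet_Ico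
    · have : volume ({(1:ℝ)} : Set ℝ) = 0 := measure_singleton 1
      rw [IntegrableOn, Measure.restrict_eq_zero.mpr this]
      exact integrable_zero_measure
  refine base.mono_set ?_
  intro x hx
  have hx' := hS1 hx
  rcases eq_or_lt_of_le hx'.2 with h | h
  · exact Or.inr (by simp [h])
  · obtain ⟨t, ht⟩ := pc_cover h0 h1 hmono x ⟨hx'.1, h⟩
    exact Or.inl (Set.mem_biUnion (Finset.mem_univ t) ht)

lemma ValidDensity.bound (hf : ValidDensity f) :
    ∃ M : ℝ, 0 ≤ M ∧ ∀ x ∈ Icc (0:ℝ) 1, f x ≤ M := by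
  obtain ⟨⟨m, a, c, h0, h1, hmono, hpc⟩, hf0, _⟩ := hf
  rcases Nat.eq_zero_or_pos m with rfl | hm
  · exfalso
    have : a 0 = 1 := h1
    rw [h0] at this; norm_num at this
  have hne : (Finset.univ : Finset (Fin m)).Nonempty := ⟨⟨0, hm⟩, Finset.mem_univ _⟩
  refine ⟨max (f 1) (max 0 (Finset.univ.sup' hne c)), le_trans (le_max_left _ _) (le_max_right _ _), ?_⟩
  intro x hx
  rcases eq_or_lt_of_le hx.2 with h | h
  · rw [h]; exact le_max_left _ _
  · obtain ⟨t, ht⟩ := pc_cover h0 h1 hmono x ⟨hx.1, h⟩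
    rw [hpc t x ht]
    exact le_trans (le_trans (Finset.le_sup' c (Finset.mem_univ t)) (le_max_right _ _))
      (le_max_right _ _)

lemma ValidDensity.exists_good_interval (hf : ValidDensity f) :
    ∃ u w : ℝ, 0 ≤ u ∧ u < w ∧ w ≤ 1 ∧
      ∀ u' w', u ≤ u' → u' < w' → w' ≤ w → 0 < cakeval f (Icc u' w') := by
  obtain ⟨⟨m, a, c, h0, h1, hmono, hpc⟩, hf0, hpos⟩ := hf
  have hint : IntegrableOn f (Icc 0 1) :=
    ValidDensity.integrableOn ⟨⟨m, a, c, h0, h1, hmono, hpc⟩, hf0, hpos⟩ (le_refl _)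
  -- value over Ico 0 1 is positive
  have hIcoIcc : cakeval f (Ico 0 1) = cakeval f (Icc 0 1) :=
    setIntegral_congr_set Ico_ae_eq_Icc
  have hpos' : 0 < cakeval f (Ico 0 1) := hIcoIcc ▸ hpos
  -- Ico 0 1 = union of pieces
  have hsub : ∀ t : Fin m, Ico (a t.castSucc) (a t.succ) ⊆ Ico (0:ℝ) 1 := by
    intro t x hx
    constructor
    · exact le_trans (h0 ▸ hmono (Fin.zero_le _)) hx.1
    · exact lt_of_lt_of_le hx.2 (h1 ▸ hmono (Fin.le_last _))
  have hcover : Ico (0:ℝ) 1 = ⋃ t ∈ (Finset.univ : Finset (Fin m)),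
      Ico (a t.castSucc) (a t.succ) := by
    apply Set.Subset.antisymm
    · intro x hx
      obtain ⟨t, ht⟩ := pc_cover h0 h1 hmono x hx
      exact Set.mem_biUnion (Finset.mem_univ t) ht
    · exact Set.iUnion₂_subset fun t _ => hsub t
  have hdisj : ∀ t ∈ (Finset.univ : Finset (Fin m)), ∀ t' ∈ (Finset.univ : Finset (Fin m)),
      t ≠ t' → volume (Ico (a t.castSucc) (a t.succ) ∩ Ico (a t'.castSucc) (a t'.succ)) = 0 := by
    intro t _ t' _ hne
    have key : ∀ s s' : Fin m, s < s' →
        Ico (a s.castSucc) (a s.succ) ∩ Ico (a s'.castSucc) (a s'.succ) = ∅ := by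
      intro s s' hlt
      apply Set.eq_empty_of_forall_notMem
      rintro x ⟨hx1, hx2⟩
      have : a s.succ ≤ a s'.castSucc := hmono (by
        rw [Fin.le_def]; rw [Fin.lt_def] at hlt
        simp only [Fin.val_succ, Fin.coe_castSucc]; omega)
      exact absurd (lt_of_lt_of_le hx1.2 (le_trans this hx2.1)) (lt_irrefl x)
    rcases lt_or_gt_of_ne hne with h | h
    · rw [key t t' h]; simp
    · rw [Set.inter_comm, key t' t h]; simp
  have hsum : cakeval f (Ico 0 1) = ∑ t : Fin m, cakeval f (Ico (a t.castSucc) (a t.succ)) := by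
    rw [hcover]
    exact cakeval_biUnion Finset.univ _ (fun t _ => measurableSet_Ico)
      (fun t _ => hint.mono_set (le_trans (hsub t) Ico_subset_Icc_self)) hdisj
  have : ∃ t : Fin m, 0 < cakeval f (Ico (a t.castSucc) (a t.succ)) := by
    by_contra hcon
    push_neg at hcon
    have : cakeval f (Ico 0 1) ≤ 0 := hsum ▸ Finset.sum_nonpos (fun t _ => hcon t)
    linarith
  obtain ⟨t, ht⟩ := this
  have hval : ∀ u' w', a t.castSucc ≤ u' → u' ≤ w' → w' ≤ a t.succ →
      cakeval f (Ico u' w') = c t * (w' - u') := by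
    intro u' w' h1' h2' h3'
    have : cakeval f (Ico u' w') = ∫ x in Ico u' w', c t := by
      apply setIntegral_congr_fun measurableSet_Ico
      intro x hx
      exact hpc t x ⟨le_trans h1' hx.1, lt_of_lt_of_le hx.2 h3'⟩
    rw [this, setIntegral_const, Real.volume_real_Ico_of_le h2', smul_eq_mul, mul_comm]
  have hlen : a t.castSucc < a t.succ := by
    by_contra hcon
    push_neg at hcon
    have : Ico (a t.castSucc) (a t.succ) = ∅ := Ico_eq_empty (not_lt.mpr hcon)
    rw [this] at ht
    simp [cakeval] at ht
  have hct : 0 < c t := by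
    have := hval _ _ (le_refl _) (le_of_lt hlen) (le_refl _)
    rw [this] at ht
    nlinarith
  refine ⟨a t.castSucc, a t.succ, h0 ▸ hmono (Fin.zero_le _), hlen,
    h1 ▸ hmono (Fin.le_last _), ?_⟩
  intro u' w' hu hw h3'
  have hIccIco : cakeval f (Ico u' w') ≤ cakeval f (Icc u' w') := by
    apply cakeval_mono hf0 ?_ Ico_subset_Icc_self
    apply ValidDensity.integrableOn ⟨⟨m, a, c, h0, h1, hmono, hpc⟩, hf0, hpos⟩
    apply Icc_subset_Icc
    · exact le_trans (h0 ▸ hmono (Fin.zero_le _)) hu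
    · exact le_trans h3' (h1 ▸ hmono (Fin.le_last _))
  have := hval u' w' hu (le_of_lt hw) h3'
  nlinarith

end density



lemma exists_disjoint_subintervals {N : ℕ} (w : Fin N → ℝ) :
    ∀ (s : Finset (Fin N)) (u : Fin N → ℝ), (∀ l ∈ s, u l < w l) →
    ∃ u' w' : Fin N → ℝ,
      (∀ l ∈ s, u l ≤ u' l ∧ u' l < w' l ∧ w' l ≤ w l) ∧
      (∀ l ∈ s, ∀ m ∈ s, l ≠ m → w' l ≤ u' m ∨ w' m ≤ u' l) := by
  intro s
  induction s using Finset.strongInduction with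
  | _ s ih =>
    rcases s.eq_empty_or_nonempty with rfl | hne
    · exact fun u _ => ⟨u, w, by simp, by simp⟩
    intro u hu
    obtain ⟨l₀, hl₀, hmin⟩ := Finset.exists_min_image s w hne
    have h0 : u l₀ < w l₀ := hu l₀ hl₀
    set m1 := (u l₀ + w l₀)/2 with hm1def
    set m2 := (u l₀ + 3*w l₀)/4 with hm2def
    have hm1 : u l₀ < m1 := by rw [hm1def]; linarith
    have hm12 : m1 < m2 := by rw [hm1def, hm2def]; linarith
    have hm2w : m2 < w l₀ := by rw [hm2def]; linarith
    obtain ⟨u', w', hrec, hdisj⟩ := ih (s.erase l₀) (Finset.erase_ssubset hl₀)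
      (fun m => max (u m) m2)
      (fun m hm => by
        have hms := Finset.mem_of_mem_erase hm
        exact max_lt (hu m hms) (lt_of_lt_of_le hm2w (hmin m hms)))
    refine ⟨fun l => if l = l₀ then u l₀ else u' l,
      fun l => if l = l₀ then m1 else w' l, ?_, ?_⟩
    · intro l hl
      by_cases h : l = l₀
      · subst h; simp only [if_pos rfl, ite_true]
        exact ⟨le_refl _, hm1, by rw [hm1def]; linarith⟩
      · have hl' : l ∈ s.erase l₀ := Finset.mem_erase.mpr ⟨h, hl⟩
        obtain ⟨h1, h2, h3⟩ := hrec l hl'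
        simp only [if_neg h]
        exact ⟨le_trans (le_max_left _ _) h1, h2, h3⟩
    · intro l hl m hm hlm
      by_cases h : l = l₀
      · subst h
        have hm' : m ∈ s.erase l := Finset.mem_erase.mpr ⟨Ne.symm hlm, hm⟩
        obtain ⟨h1, _, _⟩ := hrec m hm'
        simp only [if_pos rfl, if_neg (Ne.symm hlm), ite_true]
        exact Or.inl (le_trans hm12.le (le_trans (le_max_right _ _) h1))
      · by_cases h' : m = l₀
        · subst h'
          have hl' : l ∈ s.erase m := Finset.mem_erase.mpr ⟨h, hl⟩
          obtain ⟨h1, _, _⟩ := hrec l hl'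
          simp only [if_pos rfl, if_neg h, ite_true]
          exact Or.inr (le_trans hm12.le (le_trans (le_max_right _ _) h1))
        · have hl' : l ∈ s.erase l₀ := Finset.mem_erase.mpr ⟨h, hl⟩
          have hm' : m ∈ s.erase l₀ := Finset.mem_erase.mpr ⟨h', hm⟩
          simp only [if_neg h, if_neg h']
          exact hdisj l hl' m hm' hlm

lemma mnw_values_pos {n : ℕ} {f : Fin n → ℝ → ℝ} {A : Fin n → Set ℝ}
    (hf : ∀ j, ValidDensity (f j)) (hA : IsMNW f A) :
    ∀ l, 0 < cakeval (f l) (A l) := by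
  choose u w hu0 huw hw1 hgood using fun l => (hf l).exists_good_interval
  obtain ⟨u', w', hin, hdisj⟩ :=
    exists_disjoint_subintervals w Finset.univ u (fun l _ => huw l)
  set W : Fin n → Set ℝ := fun l => Icc (u' l) (w' l) with hW
  have hWalloc : IsAlloc W := by
    refine ⟨?_, ?_, ?_⟩
    · intro l
      have h := hin l (Finset.mem_univ l)
      exact Icc_subset_Icc (le_trans (hu0 l) h.1) (le_trans h.2.2 (hw1 l))
    · intro l; exact finUnionIcc_Icc _ _
    · intro l m hlm
      rcases hdisj l (Finset.mem_univ l) m (Finset.mem_univ m) hlm with h | h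
      · simp only [hW, Set.Icc_inter_Icc]
        rw [Real.volume_Icc, ENNReal.ofReal_eq_zero]
        have h1 : w' l ⊓ w' m ≤ w' l := inf_le_left
        have h2 : u' m ≤ u' l ⊔ u' m := le_sup_right
        linarith
      · simp only [hW, Set.Icc_inter_Icc]
        rw [Real.volume_Icc, ENNReal.ofReal_eq_zero]
        have h1 : w' l ⊓ w' m ≤ w' m := inf_le_right
        have h2 : u' l ≤ u' l ⊔ u' m := le_sup_left
        linarith
  have hWpos : ∀ l, 0 < cakeval (f l) (W l) := by
    intro l
    have h := hin l (Finset.mem_univ l)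
    exact hgood l (u' l) (w' l) h.1 h.2.1 h.2.2
  have hle := hA.2 W hWalloc
  have hWn : 0 < nashProd f W := Finset.prod_pos (fun l _ => hWpos l)
  have hAn : 0 < nashProd f A := lt_of_lt_of_le hWn hle
  intro l
  have h0 : 0 ≤ cakeval (f l) (A l) :=
    cakeval_nonneg (hA.1.2.1 l).measurableSet (hf l).2.1
  rcases h0.lt_or_eq with h | h
  · exact h
  · exfalso
    have : nashProd f A = 0 := Finset.prod_eq_zero (Finset.mem_univ l) h.symm
    linarith



lemma vol_null_mono {s t : Set ℝ} (h : volume t = 0) (hsub : s ⊆ t) : volume s = 0 :=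
  measure_mono_null hsub h

lemma unit_grid_cover {m : ℕ} (hm : 0 < m) {x : ℝ} (hx : x ∈ Icc (0:ℝ) 1) :
    ∃ r : Fin m, (r:ℝ)/m ≤ x ∧ x ≤ ((r:ℝ)+1)/m := by
  have hmR : (0:ℝ) < m := by exact_mod_cast hm
  have hxm0 : 0 ≤ x * m := mul_nonneg hx.1 hmR.le
  set r0 := min (Nat.floor (x * m)) (m - 1) with hr0
  refine ⟨⟨r0, by omega⟩, ?_, ?_⟩
  · rw [div_le_iff₀ hmR]
    have h1 : (r0 : ℝ) ≤ Nat.floor (x * m) := by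
      exact_mod_cast Nat.cast_le.mpr (min_le_left _ _)
    exact le_trans h1 (Nat.floor_le hxm0)
  · rw [le_div_iff₀ hmR]
    show x * m ≤ (r0 : ℝ) + 1
    rcases le_or_gt (Nat.floor (x * m)) (m - 1) with h | h
    · have h2 : r0 = Nat.floor (x * m) := min_eq_left h
      have h3 : x * m < (Nat.floor (x * m) : ℝ) + 1 := Nat.lt_floor_add_one _
      have h4 : (r0 : ℝ) = (Nat.floor (x * m) : ℝ) := by exact_mod_cast h2
      linarith
    · have h2 : r0 = m - 1 := min_eq_right (by omega)
      have h4 : (r0 : ℝ) + 1 = (m : ℝ) := by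
        have h5 : r0 + 1 = m := by omega
        exact_mod_cast h5
      nlinarith [hx.2]

lemma grid_cells_null {m : ℕ} {r r' : Fin m} (hne : r ≠ r') :
    volume (Icc ((r:ℝ)/m) (((r:ℝ)+1)/m) ∩ Icc ((r':ℝ)/m) (((r':ℝ)+1)/m)) = 0 := by
  have hmR : (0:ℝ) < m := by exact_mod_cast r.pos
  rw [Set.Icc_inter_Icc, Real.volume_Icc, ENNReal.ofReal_eq_zero]
  rcases lt_or_gt_of_ne hne with h | h
  · have h2 : ((r:ℝ)+1)/m ≤ (r':ℝ)/m := by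
      rw [div_le_div_iff₀ hmR hmR]
      have h1 : ((r:ℝ)+1) ≤ (r':ℝ) := by exact_mod_cast (show (r:ℕ)+1 ≤ (r':ℕ) from h)
      nlinarith
    linarith [inf_le_left (a := ((r:ℝ)+1)/m) (b := ((r':ℝ)+1)/m),
      le_sup_right (a := (r:ℝ)/m) (b := (r':ℝ)/m)]
  · have h2 : ((r':ℝ)+1)/m ≤ (r:ℝ)/m := by
      rw [div_le_div_iff₀ hmR hmR]
      have h1 : ((r':ℝ)+1) ≤ (r:ℝ) := by exact_mod_cast (show (r':ℕ)+1 ≤ (r:ℕ) from h)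
      nlinarith
    linarith [inf_le_right (a := ((r:ℝ)+1)/m) (b := ((r':ℝ)+1)/m),
      le_sup_left (a := (r:ℝ)/m) (b := (r':ℝ)/m)]

section exchange
variable {n : ℕ} {f : Fin n → ℝ → ℝ} {A : Fin n → Set ℝ}

lemma mnw_exchange (hf : ∀ j, ValidDensity (f j)) (hA : IsMNW f A)
    {j k : Fin n} (hjk : j ≠ k) {P : Set ℝ} (hPfin : FinUnionIcc P) (hPk : P ⊆ A k) :
    (cakeval (f j) (A j) + cakeval (f j) P) * (cakeval (f k) (A k) - cakeval (f k) P)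
      ≤ cakeval (f j) (A j) * cakeval (f k) (A k) := by
  obtain ⟨hsub, hufin, hpair⟩ := hA.1
  obtain ⟨T, hTfin, hTsub, hTcov, hTnull⟩ := finUnionIcc_compl hPfin
  classical
  set B : Fin n → Set ℝ := fun l => if l = j then A j ∪ P else if l = k then A k ∩ T
    else A l with hB
  have hBj : B j = A j ∪ P := by simp [hB]
  have hBk : B k = A k ∩ T := by simp [hB, Ne.symm hjk]
  have hBo : ∀ l, l ≠ j → l ≠ k → B l = A l := by
    intro l h1 h2; simp [hB, h1, h2]
  have hPsub1 : P ⊆ Icc 0 1 := fun x hx => hsub k (hPk hx)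
  have hPnull : ∀ p, p ≠ k → volume (A p ∩ P) = 0 := fun p hp =>
    vol_null_mono (hpair hp) (fun x hx => ⟨hx.1, hPk hx.2⟩)
  have hBalloc : IsAlloc B := by
    refine ⟨?_, ?_, ?_⟩
    · intro l
      by_cases h1 : l = j
      · subst h1; rw [hBj]; exact Set.union_subset (hsub l) hPsub1
      by_cases h2 : l = k
      · subst h2; rw [hBk]; exact fun x hx => hsub l hx.1
      · rw [hBo l h1 h2]; exact hsub l
    · intro l
      by_cases h1 : l = j
      · subst h1; rw [hBj]; exact (hufin l).union hPfin
      by_cases h2 : l = k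
      · subst h2; rw [hBk]; exact (hufin l).inter hTfin
      · rw [hBo l h1 h2]; exact hufin l
    · intro l l' hne
      have case_jk : volume ((A j ∪ P) ∩ (A k ∩ T)) = 0 := by
        rw [Set.union_inter_distrib_right]
        refine measure_union_null ?_ ?_
        · exact vol_null_mono (hpair hjk) (fun x hx => ⟨hx.1, hx.2.1⟩)
        · exact vol_null_mono hTnull (fun x hx => ⟨hx.1, hx.2.2⟩)
      have case_jo : ∀ l', l' ≠ j → l' ≠ k → volume ((A j ∪ P) ∩ A l') = 0 := by
        intro p h1 h2
        rw [Set.union_inter_distrib_right]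
        refine measure_union_null (hpair (Ne.symm h1)) ?_
        exact vol_null_mono (hpair (Ne.symm h2)) (fun x hx => ⟨hPk hx.1, hx.2⟩)
      have case_ko : ∀ l', l' ≠ k → volume ((A k ∩ T) ∩ A l') = 0 := by
        intro p h2
        exact vol_null_mono (hpair (Ne.symm h2)) (fun x hx => ⟨hx.1.1, hx.2⟩)
      by_cases h1 : l = j
      · subst h1
        by_cases h2 : l' = k
        · subst h2; rw [hBj, hBk]; exact case_jk
        · rw [hBj, hBo l' (Ne.symm hne) h2]; exact case_jo l' (Ne.symm hne) h2
      by_cases h2 : l = k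
      · subst h2
        by_cases h3 : l' = j
        · subst h3; rw [hBj, hBk, Set.inter_comm]; exact case_jk
        · rw [hBk, hBo l' h3 (Ne.symm hne)]; exact case_ko l' (Ne.symm hne)
      · by_cases h3 : l' = j
        · subst h3; rw [hBj, hBo l h1 h2, Set.inter_comm]; exact case_jo l h1 h2
        by_cases h4 : l' = k
        · subst h4; rw [hBk, hBo l h1 h2, Set.inter_comm]; exact case_ko l h2
        · rw [hBo l h1 h2, hBo l' h3 h4]; exact hpair hne
  have hint : ∀ p (S : Set ℝ), S ⊆ Icc 0 1 → IntegrableOn (f p) S :=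
    fun p S hS => (hf p).integrableOn hS
  have hvBj : cakeval (f j) (B j) = cakeval (f j) (A j) + cakeval (f j) P := by
    rw [hBj]
    exact cakeval_union (vol_null_mono (hpair hjk) (fun x hx => ⟨hx.1, hPk hx.2⟩))
      hPfin.measurableSet (hint j _ (hsub j)) (hint j _ hPsub1)
  have hAkeq : A k = P ∪ (A k ∩ T) := by
    apply Set.Subset.antisymm
    · intro x hx
      rcases hTcov (hsub k hx) with h | h
      · exact Or.inl h
      · exact Or.inr ⟨hx, h⟩
    · exact Set.union_subset hPk Set.inter_subset_left
  have hvBk : cakeval (f k) (B k) = cakeval (f k) (A k) - cakeval (f k) P := by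
    rw [hBk]
    have : cakeval (f k) (A k) = cakeval (f k) P + cakeval (f k) (A k ∩ T) := by
      conv_lhs => rw [hAkeq]
      exact cakeval_union
        (vol_null_mono hTnull (fun x hx => ⟨hx.1, hx.2.2⟩))
        ((hufin k).measurableSet.inter hTfin.measurableSet)
        (hint k _ hPsub1) (hint k _ (fun x hx => hsub k hx.1))
    linarith
  have hBle := hA.2 B hBalloc
  have hprodsplit : ∀ (C : Fin n → Set ℝ), nashProd f C = cakeval (f j) (C j) *
      (cakeval (f k) (C k) * ∏ l ∈ (Finset.univ.erase j).erase k, cakeval (f l) (C l)) := by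
    intro C
    rw [nashProd, ← Finset.mul_prod_erase _ _ (Finset.mem_univ j),
      ← Finset.mul_prod_erase _ _ (Finset.mem_erase.mpr ⟨Ne.symm hjk, Finset.mem_univ k⟩)]
  have hRpos : 0 < ∏ l ∈ (Finset.univ.erase j).erase k, cakeval (f l) (A l) :=
    Finset.prod_pos (fun l _ => mnw_values_pos hf hA l)
  have hRcongr : ∏ l ∈ (Finset.univ.erase j).erase k, cakeval (f l) (B l) =
      ∏ l ∈ (Finset.univ.erase j).erase k, cakeval (f l) (A l) := by
    apply Finset.prod_congr rfl
    intro l hl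
    rw [Finset.mem_erase, Finset.mem_erase] at hl
    rw [hBo l hl.2.1 hl.1]
  rw [hprodsplit B, hprodsplit A, hRcongr, hvBj, hvBk] at hBle
  rw [← mul_assoc, ← mul_assoc] at hBle
  have := le_of_mul_le_mul_right hBle hRpos
  linarith [this]

lemma mnw_foc (hf : ∀ j, ValidDensity (f j)) (hA : IsMNW f A)
    {j k : Fin n} (hjk : j ≠ k) {S : Set ℝ} (hSfin : FinUnionIcc S) (hSk : S ⊆ A k) :
    cakeval (f j) S * cakeval (f k) (A k) ≤ cakeval (f k) S * cakeval (f j) (A j) := by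
  obtain ⟨hsub, hufin, hpair⟩ := hA.1
  obtain ⟨Mk, hMk0, hMk⟩ := (hf k).bound
  have hS1 : S ⊆ Icc 0 1 := fun x hx => hsub k (hSk hx)
  have hint : ∀ p (X : Set ℝ), X ⊆ Icc 0 1 → IntegrableOn (f p) X :=
    fun p X hX => (hf p).integrableOn hX
  have key : ∀ m : ℕ, 0 < m → cakeval (f j) S * cakeval (f k) (A k) ≤
      cakeval (f k) S * cakeval (f j) (A j) + cakeval (f j) S * (Mk / m) := by
    intro m hm
    have hmR : (0:ℝ) < m := by exact_mod_cast hm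
    set P : Fin m → Set ℝ := fun r => S ∩ Icc ((r:ℝ)/m) (((r:ℝ)+1)/m) with hPdef
    have hPfin : ∀ r, FinUnionIcc (P r) := fun r => hSfin.inter (finUnionIcc_Icc _ _)
    have hPsub : ∀ r, P r ⊆ S := fun r => Set.inter_subset_left
    have hPnull : ∀ r ∈ (Finset.univ : Finset (Fin m)), ∀ r' ∈ (Finset.univ : Finset (Fin m)),
        r ≠ r' → volume (P r ∩ P r') = 0 := by
      intro r _ r' _ hne
      exact vol_null_mono (grid_cells_null hne) (fun x hx => ⟨hx.1.2, hx.2.2⟩)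
    have hcov : S = ⋃ r ∈ (Finset.univ : Finset (Fin m)), P r := by
      apply Set.Subset.antisymm
      · intro x hx
        obtain ⟨r, hr⟩ := unit_grid_cover hm (hS1 hx)
        exact Set.mem_biUnion (Finset.mem_univ r) ⟨hx, hr⟩
      · exact Set.iUnion₂_subset fun r _ => hPsub r
    have hsums : ∀ p : Fin n, cakeval (f p) S = ∑ r : Fin m, cakeval (f p) (P r) := by
      intro p
      conv_lhs => rw [hcov]
      exact cakeval_biUnion Finset.univ _ (fun r _ => (hPfin r).measurableSet)
        (fun r _ => hint p _ (fun x hx => hS1 (hPsub r hx))) hPnull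
    have hbound : ∀ r : Fin m, cakeval (f k) (P r) ≤ Mk / m := by
      intro r
      have hvol : volume (P r) ≤ ENNReal.ofReal (1/m) := by
        have h1 : P r ⊆ Icc ((r:ℝ)/m) (((r:ℝ)+1)/m) := Set.inter_subset_right
        calc volume (P r) ≤ volume (Icc ((r:ℝ)/m) (((r:ℝ)+1)/m)) := measure_mono h1
          _ = ENNReal.ofReal (((r:ℝ)+1)/m - (r:ℝ)/m) := Real.volume_Icc
          _ = ENNReal.ofReal (1/m) := by rw [div_sub_div_same]; ring_nf
      have htr : (volume (P r)).toReal ≤ 1/m :=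
        ENNReal.toReal_le_of_le_ofReal (by positivity) hvol
      have hfin' : volume (P r) ≠ ⊤ := by
        intro hcon; rw [hcon] at hvol
        exact absurd hvol (by simp [ENNReal.ofReal_lt_top.ne])
      calc cakeval (f k) (P r) ≤ (volume (P r)).toReal * Mk :=
            cakeval_le_of_bound (hPfin r).measurableSet hfin'
              (hint k _ (fun x hx => hS1 (hPsub r hx)))
              (fun x hx => hMk x (hS1 (hPsub r hx)))
        _ ≤ (1/m) * Mk := mul_le_mul_of_nonneg_right htr hMk0
        _ = Mk / m := by ring
    have hexch : ∀ r : Fin m,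
        cakeval (f j) (P r) * cakeval (f k) (A k) ≤
          cakeval (f k) (P r) * cakeval (f j) (A j) + cakeval (f j) (P r) * (Mk / m) := by
      intro r
      have h := mnw_exchange hf hA hjk (hPfin r) (fun x hx => hSk (hPsub r hx))
      have hnn : 0 ≤ cakeval (f j) (P r) := cakeval_nonneg (hPfin r).measurableSet (hf j).2.1
      nlinarith [hbound r, hnn]
    calc cakeval (f j) S * cakeval (f k) (A k)
        = ∑ r : Fin m, cakeval (f j) (P r) * cakeval (f k) (A k) := by
          rw [hsums j, Finset.sum_mul]
      _ ≤ ∑ r : Fin m, (cakeval (f k) (P r) * cakeval (f j) (A j) +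
            cakeval (f j) (P r) * (Mk / m)) := Finset.sum_le_sum (fun r _ => hexch r)
      _ = cakeval (f k) S * cakeval (f j) (A j) + cakeval (f j) S * (Mk / m) := by
          rw [Finset.sum_add_distrib, ← Finset.sum_mul, ← Finset.sum_mul, ← hsums j, ← hsums k]
  refine le_of_forall_pos_le_add ?_
  intro ε hε
  set C := cakeval (f j) S * Mk with hC
  have hC0 : 0 ≤ C :=
    mul_nonneg (cakeval_nonneg hSfin.measurableSet (hf j).2.1) hMk0
  obtain ⟨m0, hm0⟩ := exists_nat_gt (C / ε)
  have hm : 0 < m0 + 1 := Nat.succ_pos m0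
  have hkey := key (m0 + 1) hm
  have hmR : (0:ℝ) < ((m0 + 1 : ℕ) : ℝ) := by exact_mod_cast hm
  have hterm : cakeval (f j) S * (Mk / ((m0 + 1 : ℕ) : ℝ)) ≤ ε := by
    have h1 : C / ε < ((m0 + 1 : ℕ) : ℝ) := by push_cast; linarith
    have h2 : C < ε * ((m0 + 1 : ℕ) : ℝ) := by
      have h5 := (div_lt_iff₀ hε).mp h1
      nlinarith
    have h3 : cakeval (f j) S * (Mk / ((m0 + 1 : ℕ) : ℝ)) = C / ((m0 + 1 : ℕ) : ℝ) := by
      rw [hC]; ring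
    rw [h3, div_le_iff₀ hmR]
    nlinarith
  linarith [hkey, hterm]

end exchange


lemma finUnionIcc_biUnion {ι : Type*} [DecidableEq ι] (s : Finset ι) (U : ι → Set ℝ)
    (h : ∀ l, FinUnionIcc (U l)) : FinUnionIcc (⋃ l ∈ s, U l) := by
  induction s using Finset.induction with
  | empty => simpa using finUnionIcc_empty
  | @insert a s' ha ih =>
    rw [Finset.set_biUnion_insert]
    exact (h a).union ih

/-- An MNW allocation of the whole cake among the agents other than `i`: agent `i`
receives nothing and the allocation maximizes the Nash product of the remaining
agents' values. -/
def IsMNWWithout {n : ℕ} (f : Fin n → ℝ → ℝ) (i : Fin n) (B : Fin n → Set ℝ) : Prop :=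
  IsAlloc B ∧ B i = ∅ ∧
    ∀ B' : Fin n → Set ℝ, IsAlloc B' → B' i = ∅ →
      (∏ j ∈ Finset.univ.erase i, cakeval (f j) (B' j)) ≤
        ∏ j ∈ Finset.univ.erase i, cakeval (f j) (B j)

/-- Bounds on the Partial Allocation fractions (Theorem 4.1): if `A` is an MNW
allocation for all `n` agents and `A^i` is an MNW allocation of the whole cake among
the agents other than `i`, then
`∏_{j≠i} v_j(A_j) ≤ ∏_{j≠i} v_j(A^i_j) ≤ e · ∏_{j≠i} v_j(A_j)`;
equivalently the fraction `y_i = (∏_{j≠i} v_j(A_j)) / (∏_{j≠i} v_j(A^i_j))`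
satisfies `1/e ≤ y_i ≤ 1`. -/
theorem pa_fraction_bounds (n : ℕ) (f : Fin (n + 1) → ℝ → ℝ)
    (hf : ∀ j, ValidDensity (f j)) (i : Fin (n + 1))
    (A Ai : Fin (n + 1) → Set ℝ)
    (hA : IsMNW f A) (hAi : IsMNWWithout f i Ai) :
    (∏ j ∈ Finset.univ.erase i, cakeval (f j) (A j)) ≤
        (∏ j ∈ Finset.univ.erase i, cakeval (f j) (Ai j)) ∧
      (∏ j ∈ Finset.univ.erase i, cakeval (f j) (Ai j)) ≤
        Real.exp 1 * ∏ j ∈ Finset.univ.erase i, cakeval (f j) (A j) := by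
    classical
  obtain ⟨hAialloc, hAiempty, hAiopt⟩ := hAi
  obtain ⟨hAisub, hAifin, hAipair⟩ := hAialloc
  obtain ⟨hsub, hufin, hpair⟩ := hA.1
  have hint : ∀ (p : Fin (n+1)) (X : Set ℝ), X ⊆ Icc 0 1 → IntegrableOn (f p) X :=
    fun p X hX => (hf p).integrableOn hX
  have hpos : ∀ l, 0 < cakeval (f l) (A l) := mnw_values_pos hf hA
  have hnng : ∀ (p : Fin (n+1)) (X : Set ℝ), FinUnionIcc X → 0 ≤ cakeval (f p) X :=
    fun p X hX => cakeval_nonneg hX.measurableSet (hf p).2.1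
  constructor
  · -- Part 1 : A restricted to agents ≠ i is a candidate for Ai's optimality
    set B' : Fin (n+1) → Set ℝ := Function.update A i ∅ with hB'def
    have hB'i : B' i = ∅ := Function.update_self _ _ _
    have hB'o : ∀ l, l ≠ i → B' l = A l := fun l hl => Function.update_of_ne hl _ _
    have hB'sub : ∀ l, B' l ⊆ A l := by
      intro l
      by_cases h : l = i
      · subst h; rw [hB'i]; exact Set.empty_subset _
      · rw [hB'o l h]
    have hB'alloc : IsAlloc B' := by
      refine ⟨fun l => (hB'sub l).trans (hsub l), ?_, ?_⟩
      · intro l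
        by_cases h : l = i
        · subst h; rw [hB'i]; exact finUnionIcc_empty
        · rw [hB'o l h]; exact hufin l
      · intro l l' hne
        exact vol_null_mono (hpair hne) (fun x hx => ⟨hB'sub l hx.1, hB'sub l' hx.2⟩)
    have hle := hAiopt B' hB'alloc hB'i
    have hcongr : ∏ j ∈ Finset.univ.erase i, cakeval (f j) (B' j) =
        ∏ j ∈ Finset.univ.erase i, cakeval (f j) (A j) :=
      Finset.prod_congr rfl (fun j hj => by rw [hB'o j (Finset.mem_erase.mp hj).1])
    rw [hcongr] at hle
    exact hle
  · -- Part 2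
    have hsplit : ∀ (j : Fin (n+1)) (C : Fin (n+1) → Set ℝ), nashProd f C =
        cakeval (f j) (C j) * ∏ l ∈ Finset.univ.erase j, cakeval (f l) (C l) :=
      fun j C => (Finset.mul_prod_erase _ _ (Finset.mem_univ j)).symm
    have hUfin : FinUnionIcc (⋃ l, A l) := by
      have h : (⋃ l, A l) = ⋃ l ∈ (Finset.univ : Finset (Fin (n+1))), A l := by simp
      rw [h]; exact finUnionIcc_biUnion _ _ hufin
    obtain ⟨T, hTfin, hTsub, hTcov, hTnull⟩ := finUnionIcc_compl hUfin
    have hTA : ∀ l, volume (T ∩ A l) = 0 := fun l =>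
      vol_null_mono hTnull (fun x hx => ⟨Set.mem_iUnion.mpr ⟨l, hx.2⟩, hx.1⟩)
    -- leftover is worthless
    have hleft : ∀ j, cakeval (f j) T = 0 := by
      intro j
      set B : Fin (n+1) → Set ℝ := Function.update A j (A j ∪ T) with hBdef
      have hBj : B j = A j ∪ T := Function.update_self _ _ _
      have hBo : ∀ l, l ≠ j → B l = A l := fun l hl => Function.update_of_ne hl _ _
      have hBalloc : IsAlloc B := by
        refine ⟨?_, ?_, ?_⟩
        · intro l
          by_cases h : l = j
          · subst h; rw [hBj]; exact Set.union_subset (hsub l) hTsub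
          · rw [hBo l h]; exact hsub l
        · intro l
          by_cases h : l = j
          · subst h; rw [hBj]; exact (hufin l).union hTfin
          · rw [hBo l h]; exact hufin l
        · intro l l' hne
          by_cases h : l = j
          · subst h
            rw [hBj, hBo l' (Ne.symm hne), Set.union_inter_distrib_right]
            exact measure_union_null (hpair hne) (hTA l')
          by_cases h' : l' = j
          · subst h'
            rw [hBj, hBo l h, Set.inter_comm, Set.union_inter_distrib_right]
            exact measure_union_null (hpair (Ne.symm hne)) (hTA l)
          · rw [hBo l h, hBo l' h']; exact hpair hne
      have hval : cakeval (f j) (B j) = cakeval (f j) (A j) + cakeval (f j) T := by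
        rw [hBj]
        exact cakeval_union (vol_null_mono (hTA j) (fun x hx => ⟨hx.2, hx.1⟩))
          hTfin.measurableSet (hint j _ (hsub j)) (hint j _ hTsub)
      have hle := hA.2 B hBalloc
      rw [hsplit j B, hsplit j A, hval] at hle
      have hRcongr : ∏ l ∈ Finset.univ.erase j, cakeval (f l) (B l) =
          ∏ l ∈ Finset.univ.erase j, cakeval (f l) (A l) :=
        Finset.prod_congr rfl (fun l hl => by rw [hBo l (Finset.mem_erase.mp hl).1])
      rw [hRcongr] at hle
      have hRpos : 0 < ∏ l ∈ Finset.univ.erase j, cakeval (f l) (A l) :=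
        Finset.prod_pos fun l _ => hpos l
      have ht0 : 0 ≤ cakeval (f j) T := hnng j T hTfin
      nlinarith [hle, hRpos, ht0]
    -- the price of each Ai j
    set p : Fin (n+1) → ℝ :=
      fun j => ∑ k, cakeval (f k) (Ai j ∩ A k) / cakeval (f k) (A k) with hpdef
    have hp0 : ∀ j, 0 ≤ p j := by
      intro j
      apply Finset.sum_nonneg
      intro k _
      exact div_nonneg (hnng k _ ((hAifin j).inter (hufin k))) (hpos k).le
    -- price inequality
    have hprice : ∀ j, cakeval (f j) (Ai j) ≤ cakeval (f j) (A j) * p j := by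
      intro j
      have hdecomp : cakeval (f j) (Ai j) = cakeval (f j) (Ai j ∩ T) +
          ∑ k, cakeval (f j) (Ai j ∩ A k) := by
        have hset : Ai j = (Ai j ∩ T) ∪ ⋃ k ∈ (Finset.univ : Finset (Fin (n+1))), Ai j ∩ A k := by
          apply Set.Subset.antisymm
          · intro x hx
            rcases hTcov (hAisub j hx) with h | h
            · obtain ⟨l, hl⟩ := Set.mem_iUnion.mp h
              exact Or.inr (Set.mem_biUnion (Finset.mem_univ l) ⟨hx, hl⟩)
            · exact Or.inl ⟨hx, h⟩
          · apply Set.union_subset Set.inter_subset_left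
            exact Set.iUnion₂_subset fun k _ => Set.inter_subset_left
        have hbiu : cakeval (f j) (⋃ k ∈ (Finset.univ : Finset (Fin (n+1))), Ai j ∩ A k) =
            ∑ k, cakeval (f j) (Ai j ∩ A k) :=
          cakeval_biUnion _ _ (fun k _ => ((hAifin j).inter (hufin k)).measurableSet)
            (fun k _ => hint j _ (fun x hx => hAisub j hx.1))
            (fun k _ k' _ hne => vol_null_mono (hpair hne)
              (fun x hx => ⟨hx.1.2, hx.2.2⟩))
        have hd : volume ((Ai j ∩ T) ∩ ⋃ k ∈ (Finset.univ : Finset (Fin (n+1))), Ai j ∩ A k) = 0 := by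
          refine vol_null_mono hTnull (fun x hx => ?_)
          obtain ⟨k, hk⟩ := Set.mem_iUnion₂.mp hx.2
          exact ⟨Set.mem_iUnion.mpr ⟨k, hk.2.2⟩, hx.1.2⟩
        have hm : MeasurableSet (⋃ k ∈ (Finset.univ : Finset (Fin (n+1))), Ai j ∩ A k) :=
          MeasurableSet.biUnion (Finset.univ : Finset (Fin (n+1))).countable_toSet
            (fun k _ => ((hAifin j).inter (hufin k)).measurableSet)
        have h1 : IntegrableOn (f j) (Ai j ∩ T) := hint j _ (fun x hx => hAisub j hx.1)
        have h2 : IntegrableOn (f j) (⋃ k ∈ (Finset.univ : Finset (Fin (n+1))), Ai j ∩ A k) :=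
          integrableOn_finset_iUnion.mpr
            (fun k _ => hint j _ (fun x hx => hAisub j hx.1))
        conv_lhs => rw [hset]
        rw [cakeval_union hd hm h1 h2, hbiu]
      have hT0 : cakeval (f j) (Ai j ∩ T) = 0 := by
        have hle := cakeval_mono (S := Ai j ∩ T) (hf j).2.1 (hint j _ hTsub) Set.inter_subset_right
        have hge : 0 ≤ cakeval (f j) (Ai j ∩ T) := hnng j _ ((hAifin j).inter hTfin)
        rw [hleft j] at hle
        linarith
      have hterm : ∀ k, cakeval (f j) (Ai j ∩ A k) ≤
          cakeval (f j) (A j) * (cakeval (f k) (Ai j ∩ A k) / cakeval (f k) (A k)) := by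
        intro k
        by_cases h : j = k
        · subst h
          have heq : cakeval (f j) (A j) * (cakeval (f j) (Ai j ∩ A j) / cakeval (f j) (A j)) =
              cakeval (f j) (Ai j ∩ A j) := by
            field_simp
            exact mul_div_cancel_left₀ _ (hpos j).ne'
          rw [heq]
        · have hfoc := mnw_foc hf hA h ((hAifin j).inter (hufin k)) Set.inter_subset_right
          rw [← mul_div_assoc, le_div_iff₀ (hpos k)]
          nlinarith [hfoc]
      calc cakeval (f j) (Ai j) = cakeval (f j) (Ai j ∩ T) +
            ∑ k, cakeval (f j) (Ai j ∩ A k) := hdecomp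
        _ = ∑ k, cakeval (f j) (Ai j ∩ A k) := by rw [hT0, zero_add]
        _ ≤ ∑ k, cakeval (f j) (A j) * (cakeval (f k) (Ai j ∩ A k) / cakeval (f k) (A k)) :=
            Finset.sum_le_sum fun k _ => hterm k
        _ = cakeval (f j) (A j) * p j := by rw [hpdef, Finset.mul_sum]
    -- total price bound
    have hpricesum : ∑ j ∈ Finset.univ.erase i, p j ≤ (n + 1 : ℝ) := by
      rw [hpdef]
      rw [Finset.sum_comm]
      have hinner : ∀ k, ∑ j ∈ Finset.univ.erase i,
          cakeval (f k) (Ai j ∩ A k) / cakeval (f k) (A k) ≤ 1 := by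
        intro k
        rw [← Finset.sum_div, div_le_one (hpos k)]
        have hsum : ∑ j ∈ Finset.univ.erase i, cakeval (f k) (Ai j ∩ A k) =
            cakeval (f k) (⋃ j ∈ Finset.univ.erase i, Ai j ∩ A k) :=
          (cakeval_biUnion _ _ (fun j _ => ((hAifin j).inter (hufin k)).measurableSet)
            (fun j _ => hint k _ (fun x hx => hsub k hx.2))
            (fun j _ j' _ hne => vol_null_mono (hAipair hne)
              (fun x hx => ⟨hx.1.1, hx.2.1⟩))).symm
        rw [hsum]
        exact cakeval_mono (hf k).2.1 (hint k _ (hsub k))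
          (Set.iUnion₂_subset fun j _ => Set.inter_subset_right)
      calc ∑ k : Fin (n+1), ∑ j ∈ Finset.univ.erase i,
            cakeval (f k) (Ai j ∩ A k) / cakeval (f k) (A k)
          ≤ ∑ _k : Fin (n+1), (1:ℝ) := Finset.sum_le_sum fun k _ => hinner k
        _ = (n + 1 : ℝ) := by simp
    -- AM-GM: product of prices at most e
    have hprodp : ∏ j ∈ Finset.univ.erase i, p j ≤ Real.exp 1 := by
      rcases Nat.eq_zero_or_pos n with rfl | hn
      · have hempty : (Finset.univ : Finset (Fin 1)).erase i = ∅ := by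
          apply Finset.eq_empty_of_forall_notMem
          intro x hx
          exact (Finset.mem_erase.mp hx).1 (Fin.ext (by omega))
        rw [hempty, Finset.prod_empty]
        exact Real.one_le_exp (by norm_num)
      · have hnR : (0:ℝ) < n := by exact_mod_cast hn
        have hcard : (Finset.univ.erase i).card = n := by
          rw [Finset.card_erase_of_mem (Finset.mem_univ i), Finset.card_univ, Fintype.card_fin]
          omega
        have hamgm := Real.geom_mean_le_arith_mean_weighted (Finset.univ.erase i)
          (fun _ => 1 / (n:ℝ)) p (fun _ _ => by positivity)
          (by rw [Finset.sum_const, hcard, nsmul_eq_mul]; field_simp)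
          (fun j _ => hp0 j)
        rw [Real.finset_prod_rpow _ _ (fun j _ => hp0 j)] at hamgm
        have hsum2 : ∑ j ∈ Finset.univ.erase i, 1 / (n:ℝ) * p j ≤ (n+1)/n := by
          rw [← Finset.mul_sum]
          rw [div_eq_mul_inv ((n:ℝ)+1), mul_comm ((n:ℝ)+1), ← one_div]
          apply mul_le_mul_of_nonneg_left _ (by positivity)
          exact_mod_cast hpricesum
        have h1 : (∏ j ∈ Finset.univ.erase i, p j) ^ ((1:ℝ)/n) ≤ (n+1)/n :=
          le_trans hamgm hsum2
        have hprodnn : 0 ≤ ∏ j ∈ Finset.univ.erase i, p j :=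
          Finset.prod_nonneg fun j _ => hp0 j
        have h2 : ∏ j ∈ Finset.univ.erase i, p j =
            ((∏ j ∈ Finset.univ.erase i, p j) ^ ((1:ℝ)/n)) ^ n := by
          rw [← Real.rpow_natCast ((∏ j ∈ Finset.univ.erase i, p j) ^ ((1:ℝ)/n)) n,
            ← Real.rpow_mul hprodnn]
          rw [one_div_mul_cancel (by exact_mod_cast hn.ne' : (n:ℝ) ≠ 0), Real.rpow_one]
        have h3 : ((n:ℝ)+1)/n = 1 + 1/n := by field_simp
        have h4 : (1 + 1/(n:ℝ)) ^ n ≤ Real.exp 1 := by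
          have h5 : 1 + 1/(n:ℝ) ≤ Real.exp (1/n) := by
            have := Real.add_one_le_exp (1/(n:ℝ))
            linarith
          calc (1 + 1/(n:ℝ)) ^ n ≤ (Real.exp (1/n)) ^ n :=
                pow_le_pow_left₀ (by positivity) h5 n
            _ = Real.exp ((n:ℝ) * (1/n)) := (Real.exp_nat_mul _ n).symm
            _ = Real.exp 1 := by
                rw [mul_one_div_cancel hnR.ne']
        calc ∏ j ∈ Finset.univ.erase i, p j
            = ((∏ j ∈ Finset.univ.erase i, p j) ^ ((1:ℝ)/n)) ^ n := h2
          _ ≤ (((n:ℝ)+1)/n) ^ n :=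
              pow_le_pow_left₀ (Real.rpow_nonneg hprodnn _) h1 n
          _ = (1 + 1/(n:ℝ)) ^ n := by rw [h3]
          _ ≤ Real.exp 1 := h4
    -- final assembly
    calc ∏ j ∈ Finset.univ.erase i, cakeval (f j) (Ai j)
        ≤ ∏ j ∈ Finset.univ.erase i, cakeval (f j) (A j) * p j :=
          Finset.prod_le_prod (fun j _ => hnng j _ (hAifin j)) (fun j _ => hprice j)
      _ = (∏ j ∈ Finset.univ.erase i, cakeval (f j) (A j)) *
            ∏ j ∈ Finset.univ.erase i, p j := Finset.prod_mul_distrib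
      _ ≤ (∏ j ∈ Finset.univ.erase i, cakeval (f j) (A j)) * Real.exp 1 := by
          apply mul_le_mul_of_nonneg_left hprodp
          exact Finset.prod_nonneg fun j _ => (hpos j).le
      _ = Real.exp 1 * ∏ j ∈ Finset.univ.erase i, cakeval (f j) (A j) := mul_comm _ _
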